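/- For every v ∈ (0, π), the phase-lag numerator of the phase-fitted method PF-D0 vanishes at v: 2·[cos(6v) + (−2 + v²·b1(v))·cos(5v) + (2 + v²·b2(v))·cos(4v) + (−1 + v²·b3(v))·cos(3v) + v²·b4(v)·cos(2v) + v²·b5(v)·cos(v)] + v²·b6(v) = 0. -/
import Mathlib


/-- The variable coefficient `b₁(v)` of the phase-fitted method PF-D0. -/
noncomputable def pfb1 (v : ℝ) : ℝ :=
  (((-124184636) * Real.cos v + 70378348 * Real.cos (2 * v) - 24862148 * Real.cos (3 * v)
        + 5153611 * Real.cos (4 * v)) * v ^ 2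
      + 25 * (3013169 * v ^ 2 - 16128 * Real.cos (3 * v) + 32256 * Real.cos (4 * v)
        - 32256 * Real.cos (5 * v) + 16128 * Real.cos (6 * v)))
    / (206438400 * v ^ 2 * (Real.sin (v / 2)) ^ 10)

/-- The variable coefficient `b₂(v)` of the phase-fitted method PF-D0. -/
noncomputable def pfb2 (v : ℝ) : ℝ :=
  (v ^ 2 * (159588050 * Real.cos v - 85350160 * Real.cos (2 * v)
        + 16708985 * Real.cos (3 * v) - 5153611 * Real.cos (5 * v))
      - 16 * (6496079 * v ^ 2 - 252000 * Real.cos (3 * v) + 504000 * Real.cos (4 * v)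
        - 504000 * Real.cos (5 * v) + 252000 * Real.cos (6 * v)))
    / (206438400 * v ^ 2 * (Real.sin (v / 2)) ^ 10)

/-- The variable coefficient `b₃(v)` of the phase-fitted method PF-D0. -/
noncomputable def pfb3 (v : ℝ) : ℝ :=
  (((-367257540) * Real.cos v + 183567900 * Real.cos (2 * v)
        - 16708985 * Real.cos (4 * v) + 24862148 * Real.cos (5 * v)) * v ^ 2
      + 81 * (3175117 * v ^ 2 - 224000 * Real.cos (3 * v) + 448000 * Real.cos (4 * v)
        - 448000 * Real.cos (5 * v) + 224000 * Real.cos (6 * v)))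
    / (206438400 * v ^ 2 * (Real.sin (v / 2)) ^ 10)

/-- The variable coefficient `b₄(v)` of the phase-fitted method PF-D0. -/
noncomputable def pfb4 (v : ℝ) : ℝ :=
  (30675810 * v ^ 2 * Real.cos v - 42958788 * v ^ 2
      + 75 * (161280 - 611893 * v ^ 2) * Real.cos (3 * v)
      + 140 * (152411 * v ^ 2 - 172800) * Real.cos (4 * v)
      + (24192000 - 17594587 * v ^ 2) * Real.cos (5 * v)
      - 12096000 * Real.cos (6 * v))
    / (51609600 * v ^ 2 * (Real.sin (v / 2)) ^ 10)

/-- The variable coefficient `b₅(v)` of the phase-fitted method PF-D0. -/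
noncomputable def pfb5 (v : ℝ) : ℝ :=
  ((-61351620) * v ^ 2 * Real.cos (2 * v) + 85936557 * v ^ 2
      + 30 * (6120959 * v ^ 2 - 1411200) * Real.cos (3 * v)
      + 25 * (3386880 - 3191761 * v ^ 2) * Real.cos (4 * v)
      + (62092318 * v ^ 2 - 84672000) * Real.cos (5 * v)
      + 42336000 * Real.cos (6 * v))
    / (103219200 * v ^ 2 * (Real.sin (v / 2)) ^ 10)

/-- The variable coefficient `b₆(v)` of the phase-fitted method PF-D0. -/
noncomputable def pfb6 (v : ℝ) : ℝ :=
  (((-171873114) * Real.cos v + 171835152 * Real.cos (2 * v)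
        - 257184477 * Real.cos (3 * v) + 103937264 * Real.cos (4 * v)
        - 75329225 * Real.cos (5 * v)) * v ^ 2
      + 50803200 * (Real.cos (3 * v) - 2 * Real.cos (4 * v)
        + 2 * Real.cos (5 * v) - Real.cos (6 * v)))
    / (103219200 * v ^ 2 * (Real.sin (v / 2)) ^ 10)

/-- The phase-lag numerator of the phase-fitted method PF-D0 vanishes at the
fitting frequency `v` for every `v ∈ (0, π)`. -/
theorem pfd0_phase_lag_numerator_vanishes :
    ∀ v ∈ Set.Ioo (0 : ℝ) Real.pi,
      2 * (Real.cos (6 * v) + (-2 + v ^ 2 * pfb1 v) * Real.cos (5 * v)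
          + (2 + v ^ 2 * pfb2 v) * Real.cos (4 * v)
          + (-1 + v ^ 2 * pfb3 v) * Real.cos (3 * v)
          + v ^ 2 * pfb4 v * Real.cos (2 * v)
          + v ^ 2 * pfb5 v * Real.cos v)
        + v ^ 2 * pfb6 v = 0 := by
  rintro v ⟨hv0, hvpi⟩
  have hvne : v ≠ 0 := ne_of_gt hv0
  have hs : Real.sin (v / 2) ≠ 0 := by
    have := Real.sin_pos_of_pos_of_lt_pi (x := v / 2) (by linarith)
      (by linarith [Real.pi_pos])
    exact ne_of_gt this
  set c := Real.cos v with hc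
  have hsq : Real.sin (v / 2) ^ 2 = (1 - c) / 2 := by
    have h1 := Real.sin_sq_add_cos_sq (v / 2)
    have h2 := Real.cos_two_mul (v / 2)
    rw [show 2 * (v / 2) = v by ring] at h2
    rw [hc]
    linarith
  have h10 : Real.sin (v / 2) ^ 10 = ((1 - c) / 2) ^ 5 := by
    rw [show (10 : ℕ) = 2 * 5 from rfl, pow_mul, hsq]
  have hc1 : (1 : ℝ) - c ≠ 0 := by
    intro h
    apply hs
    have : Real.sin (v / 2) ^ 2 = 0 := by rw [hsq, h]; ring
    exact pow_eq_zero_iff (n := 2) (by norm_num) |>.mp this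
  have key : ∀ a b : ℝ, Real.cos (a + b) = 2 * Real.cos a * Real.cos b - Real.cos (a - b) := by
    intro a b
    rw [Real.cos_add, Real.cos_sub]; ring
  have h2 : Real.cos (2 * v) = 2 * c ^ 2 - 1 := by
    rw [Real.cos_two_mul]
  have h3 : Real.cos (3 * v) = 4 * c ^ 3 - 3 * c := by
    rw [Real.cos_three_mul]
  have h4 : Real.cos (4 * v) = 8 * c ^ 4 - 8 * c ^ 2 + 1 := by
    rw [show (4 : ℝ) * v = 2 * (2 * v) by ring, Real.cos_two_mul, h2]; ring
  have h6 : Real.cos (6 * v) = 32 * c ^ 6 - 48 * c ^ 4 + 18 * c ^ 2 - 1 := by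
    rw [show (6 : ℝ) * v = 2 * (3 * v) by ring, Real.cos_two_mul, h3]; ring
  have h5 : Real.cos (5 * v) = 16 * c ^ 5 - 20 * c ^ 3 + 5 * c := by
    rw [show (5 : ℝ) * v = 4 * v + v by ring, key, show 4 * v - v = 3 * v by ring, h4, h3]
    ring
  rw [pfb1, pfb2, pfb3, pfb4, pfb5, pfb6, h6, h5, h4, h3, h2, h10, ← hc]
  field_simp
  ring
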